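/- Let d be a positive integer and p a prime with p ∤ d. Then for every integer m with 0 ≤ m < d, ∑_{a=0}^{m} δ_∈(a) = #{1 ≤ i < m : i < d·{p·i/d} ≤ m}. -/

import Mathlib

open scoped Classical

/-- `{x}' := {x}` if the fractional part is nonzero, else `1`. -/
noncomputable def fract' (x : ℚ) : ℚ := if Int.fract x = 0 then 1 else Int.fract x

/-- `δ_∈(a) = 1` iff there is `i ≥ 1` with `p·i ≡ a (mod d)` and `i/d < {a/d}`. -/
noncomputable def deltaIn (d p a : ℕ) : ℤ :=
  if ∃ i : ℕ, 1 ≤ i ∧ p * i ≡ a [MOD d] ∧ (i : ℚ) / d < Int.fract ((a : ℚ) / d) then 1 else 0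

/-- `δ_<(a) = 1` iff `{a/d}' < {pa/d}'`. -/
noncomputable def deltaLt (d p a : ℕ) : ℤ :=
  if fract' ((a : ℚ) / d) < fract' (((p : ℚ) * a) / d) then 1 else 0

/-- `ϖ(a) = ⌈(p−1)a/d⌉ − δ_∈(a)`. -/
noncomputable def varpi (d p a : ℕ) : ℤ :=
  ⌈(((p : ℚ) - 1) * a) / d⌉ - deltaIn d p a

/-- The arithmetic polygon of `△ = [0, d]`: `p_△(m) = ∑_{a=0}^{m−1} ϖ(a)`. -/
noncomputable def pTri (d p m : ℕ) : ℤ := ∑ a ∈ Finset.range m, varpi d p a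

lemma fract_nat_div (d : ℕ) (hd : 0 < d) (n : ℕ) :
    Int.fract ((n : ℚ) / d) = ((n % d : ℕ) : ℚ) / d := by
  have hd' : (0:ℚ) < d := by exact_mod_cast hd
  conv_lhs => rw [← Nat.div_add_mod n d]
  push_cast
  rw [add_div, mul_div_cancel_left₀ _ (ne_of_gt hd'), Int.fract_natCast_add]
  refine Int.fract_eq_self.mpr ⟨by positivity, ?_⟩
  rw [div_lt_one hd']
  exact_mod_cast Nat.mod_lt n hd

lemma coeM_eq (s : Finset ℕ) :
    (do let a ← s; pure ((a : ℚ)) : Finset ℚ) = s.image (fun a : ℕ => (a : ℚ)) := by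
  ext b
  rw [Finset.mem_image]
  constructor
  · intro hb
    obtain ⟨a, ha, hba⟩ :=
      (@Finset.mem_sup ℚ ℕ (fun a b => Classical.propDecidable (a=b)) s _ b).mp hb
    exact ⟨a, ha, (Finset.mem_singleton.mp hba).symm⟩
  · rintro ⟨a, ha, rfl⟩
    exact (@Finset.mem_sup ℚ ℕ (fun a b => Classical.propDecidable (a=b)) s _ _).mpr
      ⟨a, ha, Finset.mem_singleton_self _⟩

theorem stmt12 (d p : ℕ) (hd : 0 < d) (hp : p.Prime) (hpd : ¬ p ∣ d)
    (m : ℕ) (hm : m < d) :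
    ∑ a ∈ Finset.range (m + 1), deltaIn d p a =
      (((Finset.Ico 1 m).filter (fun i =>
        (i : ℚ) < d * Int.fract (((p : ℚ) * i) / d) ∧
        d * Int.fract (((p : ℚ) * i) / d) ≤ m)).card : ℤ) := by
  have hd' : (0:ℚ) < d := by exact_mod_cast hd
  have hcop : Nat.Coprime p d := (Nat.Prime.coprime_iff_not_dvd hp).mpr hpd
  have hfr : ∀ i : ℕ, (d:ℚ) * Int.fract (((p : ℚ) * i) / d) = ((p * i % d : ℕ) : ℚ) := by
    intro i
    rw [show ((p:ℚ) * i) = ((p*i : ℕ) : ℚ) by push_cast; ring, fract_nat_div d hd,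
      mul_div_cancel₀ _ (ne_of_gt hd')]
  -- LHS characterization
  have hL : ∀ a ∈ Finset.range (m+1), deltaIn d p a
      = if (∃ i, 1 ≤ i ∧ i < a ∧ p * i % d = a) then 1 else 0 := by
    intro a ha
    have ham : a ≤ m := Nat.lt_succ_iff.mp (Finset.mem_range.mp ha)
    have had : a < d := lt_of_le_of_lt ham hm
    unfold deltaIn
    have hfa : Int.fract ((a:ℚ)/d) = (a:ℚ)/d :=
      Int.fract_eq_self.mpr ⟨by positivity, by rw [div_lt_one hd']; exact_mod_cast had⟩
    congr 1
    apply propext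
    constructor
    · rintro ⟨i, h1, hmod, hlt⟩
      rw [hfa, div_lt_div_iff_of_pos_right hd'] at hlt
      have hia : i < a := by exact_mod_cast hlt
      refine ⟨i, h1, hia, ?_⟩
      have h2 := hmod
      unfold Nat.ModEq at h2
      rwa [Nat.mod_eq_of_lt had] at h2
    · rintro ⟨i, h1, hia, hmod⟩
      refine ⟨i, h1, ?_, ?_⟩
      · unfold Nat.ModEq; rw [hmod, Nat.mod_eq_of_lt had]
      · rw [hfa, div_lt_div_iff_of_pos_right hd']; exact_mod_cast hia
  rw [Finset.sum_congr rfl hL, Finset.sum_boole]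
  -- RHS: unfold monadic coercion and move filter inside the image
  rw [coeM_eq, Finset.filter_image]
  rw [Finset.card_image_of_injective _ (fun a b h => by exact_mod_cast h)]
  have hR : (Finset.Ico 1 m).filter (fun i : ℕ =>
        ((i:ℚ)) < d * Int.fract (((p : ℚ) * i) / d) ∧
        (d:ℚ) * Int.fract (((p : ℚ) * i) / d) ≤ m)
      = (Finset.Ico 1 m).filter (fun i => i < p * i % d ∧ p * i % d ≤ m) := by
    apply Finset.filter_congr
    intro i _
    rw [hfr i]
    constructor
    · rintro ⟨h1, h2⟩; exact ⟨by exact_mod_cast h1, by exact_mod_cast h2⟩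
    · rintro ⟨h1, h2⟩; exact ⟨by exact_mod_cast h1, by exact_mod_cast h2⟩
  rw [hR]
  norm_num
  apply (Finset.card_bij (fun i _ => p * i % d) ?_ ?_ ?_).symm
  · intro i hi
    simp only [Finset.mem_filter, Finset.mem_Ico, Finset.mem_range] at hi ⊢
    obtain ⟨⟨h1, _⟩, h2, h3⟩ := hi
    exact ⟨Nat.lt_succ_of_le h3, i, h1, h2, rfl⟩
  · intro i hi j hj hij
    simp only [Finset.mem_filter, Finset.mem_Ico] at hi hj
    have hmod : p * i ≡ p * j [MOD d] := by unfold Nat.ModEq; simp [hij]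
    have h2 := (Nat.ModEq.cancel_left_of_coprime (Nat.Coprime.symm hcop) hmod)
    unfold Nat.ModEq at h2
    rwa [Nat.mod_eq_of_lt (lt_trans hi.1.2 hm), Nat.mod_eq_of_lt (lt_trans hj.1.2 hm)] at h2
  · intro a ha
    simp only [Finset.mem_filter, Finset.mem_range] at ha
    obtain ⟨ham, i, h1, hia, hmod⟩ := ha
    refine ⟨i, ?_, hmod⟩
    simp only [Finset.mem_filter, Finset.mem_Ico]
    exact ⟨⟨h1, lt_of_lt_of_le hia (Nat.lt_succ_iff.mp ham)⟩, hmod ▸ hia, hmod ▸ Nat.lt_succ_iff.mp ham⟩
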